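/- Let m and h be positive integers with 2 ≤ h ≤ m-1 and let e = 3^h + 5. If θ is an element of GF(3^m) not lying in the prime subfield GF(3) and θ satisfies (θ+1)^e + θ^e + 1 = 0, then θ^(3^h) · (θ^4 - θ^3 + θ^2 + 1) = θ^4 + θ^2 - θ + 1, and moreover θ^4 - θ^3 + θ^2 + 1 ≠ 0. -/

import Mathlib

theorem stmt_9 (m h : ℕ) (hm : 0 < m) (hh2 : 2 ≤ h) (hhm : h ≤ m - 1)
    (e : ℕ) (he : e = 3 ^ h + 5)
    (θ : GaloisField 3 m)
    (hθ : θ ∉ Set.range (algebraMap (ZMod 3) (GaloisField 3 m)))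
    (heq : (θ + 1) ^ e + θ ^ e + 1 = 0) :
    θ ^ (3 ^ h) * (θ ^ 4 - θ ^ 3 + θ ^ 2 + 1) = θ ^ 4 + θ ^ 2 - θ + 1 ∧
    θ ^ 4 - θ ^ 3 + θ ^ 2 + 1 ≠ 0 := by
  have h0 : θ ≠ 0 := fun h => hθ ⟨0, by simp [h]⟩
  have h1 : θ ≠ 1 := fun h => hθ ⟨1, by simp [h]⟩
  have hn1 : θ ≠ -1 := fun h => hθ ⟨-1, by simp [h]⟩
  have h3 : (3 : GaloisField 3 m) = 0 := by
    exact_mod_cast CharP.cast_eq_zero (GaloisField 3 m) 3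
  set t := θ ^ (3 ^ h) with ht
  have hfrob : (θ + 1) ^ (3 ^ h) = t + 1 := by
    rw [add_pow_char_pow]; simp [ht]
  have heq' : (t + 1) * (θ + 1) ^ 5 + t * θ ^ 5 + 1 = 0 := by
    rw [he, pow_add, pow_add, hfrob] at heq
    linear_combination heq
  have hm1 : θ - 1 ≠ 0 := sub_ne_zero.mpr h1
  have key : (θ - 1) * (t * (θ ^ 4 - θ ^ 3 + θ ^ 2 + 1) - (θ ^ 4 + θ ^ 2 - θ + 1)) = 0 := by
    linear_combination -heq' +
      (t * (θ ^ 5 + θ ^ 4 + 4 * θ ^ 3 + 3 * θ ^ 2 + 2 * θ) +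
        2 * θ ^ 4 + 3 * θ ^ 3 + 4 * θ ^ 2 + θ + 1) * h3
  have main : t * (θ ^ 4 - θ ^ 3 + θ ^ 2 + 1) = θ ^ 4 + θ ^ 2 - θ + 1 := by
    rcases mul_eq_zero.mp key with h | h
    · exact absurd h hm1
    · exact sub_eq_zero.mp h
  refine ⟨main, fun hP => ?_⟩
  have hQ : (θ ^ 4 + θ ^ 2 - θ + 1 : GaloisField 3 m) = 0 := by
    rw [← main, hP, mul_zero]
  have : θ * (θ - 1) * (θ + 1) = 0 := by linear_combination hQ - hP
  rcases mul_eq_zero.mp this with h | h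
  · rcases mul_eq_zero.mp h with h | h
    · exact h0 h
    · exact hm1 h
  · exact hn1 (eq_neg_of_add_eq_zero_left h)
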